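/- Let G = (V, E) be a finite simple graph with maximum degree at most Δ, and let b ≥ 1 be a natural number. Then there exists an edge coloring col : E → Fin (2b − 1) using at most 2b − 1 colors such that every vertex is incident to at most ⌈Δ/b⌉ edges of each color. -/

import Mathlib

/-- Let `G = (V, E)` be a finite simple graph with maximum degree at most `Δ`, and let
`b ≥ 1`. Then there exists an edge coloring `col : E → Fin (2b − 1)` using at most `2b − 1`
colors such that every vertex is incident to at most `⌈Δ/b⌉` edges of each color. -/
theorem stmt_4 {V : Type*} [Fintype V] (G : SimpleGraph V) [DecidableRel G.Adj]
    (Δ b : ℕ) (hb : 1 ≤ b) (hΔ : ∀ v : V, G.degree v ≤ Δ) :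
    ∃ col : G.edgeSet → Fin (2 * b - 1),
      ∀ (v : V) (j : Fin (2 * b - 1)),
        (({e : G.edgeSet | v ∈ (e : Sym2 V) ∧ col e = j}.ncard : ℤ)
          ≤ ⌈(Δ : ℚ) / b⌉) := by
  classical
  set c : ℕ := (Δ + b - 1) / b with hc
  -- `Δ ≤ c * b`
  have hcb : Δ ≤ c * b := by
    have h1 := Nat.div_add_mod (Δ + b - 1) b
    have h2 : (Δ + b - 1) % b < b := Nat.mod_lt _ (by omega)
    rw [← hc] at h1
    rw [mul_comm]
    generalize b * c = m at *
    omega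
  -- `c * b ≤ Δ + b - 1`, hence `c * b < Δ + b`
  have hcb2 : c * b < Δ + b := by
    have := Nat.div_mul_le_self (Δ + b - 1) b
    rw [← hc] at this
    generalize c * b = m at *
    omega
  -- `(c : ℤ) ≤ ⌈Δ/b⌉`
  have hceil : (c : ℤ) ≤ ⌈(Δ : ℚ) / b⌉ := by
    have hb0 : (0:ℚ) < (b:ℚ) := by exact_mod_cast hb
    have hq : (c:ℚ) * b < (Δ:ℚ) + b := by exact_mod_cast hcb2
    have : ((c:ℤ) - 1) < ⌈(Δ : ℚ) / b⌉ := by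
      rw [Int.lt_ceil, lt_div_iff₀ hb0]
      push_cast
      nlinarith
    omega
  -- greedy coloring over finite sets of edges
  have key : ∀ S : Finset G.edgeSet, ∃ col : G.edgeSet → Fin (2 * b - 1),
      ∀ (x : V) (j : Fin (2 * b - 1)),
        (S.filter (fun (e : G.edgeSet) => x ∈ (e : Sym2 V) ∧ col e = j)).card ≤ c := by
    intro S
    induction S using Finset.induction with
    | empty => exact ⟨fun _ => ⟨0, by omega⟩, by simp⟩
    | @insert e S' he ih =>
      obtain ⟨col', hcol'⟩ := ih
      obtain ⟨s, hs⟩ := e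
      revert he
      induction s using Sym2.ind with
      | _ u w =>
        intro he
        have hadj : G.Adj u w := hs
        have hΔ1 : 1 ≤ Δ := by
          have h1 : 0 < G.degree u := by
            rw [G.degree_pos_iff_exists_adj]; exact ⟨w, hadj⟩
          have := hΔ u
          omega
        have hc1 : 1 ≤ c := by
          rw [hc]
          rw [Nat.one_le_div_iff (by omega)]
          omega
        -- the set of full colors at a vertex
        set F : V → Finset (Fin (2 * b - 1)) := fun x =>
          Finset.univ.filter (fun j =>
            c ≤ (S'.filter (fun (e : G.edgeSet) => x ∈ (e : Sym2 V) ∧ col' e = j)).card) with hF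
        -- incidence count bound
        have hcount : ∀ x : V, x ∈ (s(u, w) : Sym2 V) →
            (S'.filter (fun (e : G.edgeSet) => x ∈ (e : Sym2 V))).card ≤ Δ - 1 := by
          intro x hx
          have hsub : (S'.filter (fun (e : G.edgeSet) => x ∈ (e : Sym2 V))).card ≤
              ((G.incidenceFinset x).erase s(u, w)).card := by
            apply Finset.card_le_card_of_injOn (fun (e : G.edgeSet) => (e : Sym2 V))
            · intro e hmem
              simp only [Finset.mem_coe, Finset.mem_filter] at hmem ⊢
              rw [Finset.mem_erase]
              constructor
              · intro h
                apply he
                have h2 : e = (⟨s(u,w), hs⟩ : G.edgeSet) := Subtype.ext h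
                rw [← h2]
                exact hmem.1
              · rw [SimpleGraph.mem_incidenceFinset]
                exact ⟨e.2, hmem.2⟩
            · intro a _ b _ hab
              exact Subtype.ext hab
          have hcard : ((G.incidenceFinset x).erase s(u, w)).card =
              G.degree x - 1 := by
            rw [Finset.card_erase_of_mem, G.card_incidenceFinset_eq_degree]
            rw [SimpleGraph.mem_incidenceFinset]
            exact ⟨hs, hx⟩
          have := hΔ x
          omega
        -- full-color sets are small
        have hFcard : ∀ x : V, x ∈ (s(u, w) : Sym2 V) → (F x).card ≤ b - 1 := by
          intro x hx
          by_contra hcon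
          push_neg at hcon
          have hsum : (F x).card * c ≤
              ∑ j : Fin (2 * b - 1),
                ((S'.filter (fun (e : G.edgeSet) => x ∈ (e : Sym2 V))).filter
                  (fun (e : G.edgeSet) => col' e = j)).card := by
            calc (F x).card * c = ∑ j ∈ F x, c := by rw [Finset.sum_const, smul_eq_mul]
            _ ≤ ∑ j ∈ F x, ((S'.filter (fun (e : G.edgeSet) => x ∈ (e : Sym2 V))).filter
                  (fun (e : G.edgeSet) => col' e = j)).card := by
                apply Finset.sum_le_sum
                intro j hj
                rw [hF] at hj
                simp only [Finset.mem_filter] at hj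
                rw [Finset.filter_filter]
                exact hj.2
            _ ≤ _ := Finset.sum_le_sum_of_subset (Finset.subset_univ _)
          rw [← Finset.card_eq_sum_card_fiberwise (fun e _ => Finset.mem_univ (col' e))]
            at hsum
          have h1 := hcount x hx
          have h2 : b * c ≤ (F x).card * c := Nat.mul_le_mul_right c (by omega)
          have h3 : Δ ≤ b * c := by rw [mul_comm]; exact hcb
          omega
        -- pick a color not full at `u` or `w`
        have hex : ∃ j : Fin (2 * b - 1), j ∉ F u ∪ F w := by
          by_contra h
          push_neg at h
          have hsub : (Finset.univ : Finset (Fin (2 * b - 1))) ⊆ F u ∪ F w :=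
            fun j _ => h j
          have := Finset.card_le_card hsub
          rw [Finset.card_univ, Fintype.card_fin] at this
          have h1 := hFcard u (by simp)
          have h2 := hFcard w (by simp)
          have := Finset.card_union_le (F u) (F w)
          omega
        obtain ⟨j, hj⟩ := hex
        refine ⟨Function.update col' ⟨s(u, w), hs⟩ j, ?_⟩
        intro x j'
        have hagree : ∀ e ∈ S',
            (x ∈ (e : Sym2 V) ∧ Function.update col' ⟨s(u, w), hs⟩ j e = j') =
            (x ∈ (e : Sym2 V) ∧ col' e = j') := by
          intro e heS
          have hne : e ≠ ⟨s(u, w), hs⟩ := by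
            intro h; apply he; rwa [← h]
          rw [Function.update_of_ne hne]
        have hfilter : (S'.filter (fun (e : G.edgeSet) => x ∈ (e : Sym2 V) ∧
              Function.update col' ⟨s(u, w), hs⟩ j e = j')) =
            (S'.filter (fun (e : G.edgeSet) => x ∈ (e : Sym2 V) ∧ col' e = j')) := by
          apply Finset.filter_congr
          intro e heS
          simp only [hagree e heS]
        rw [Finset.filter_insert]
        split_ifs with hcond
        · -- the new edge is counted
          obtain ⟨hx, hcol⟩ := hcond
          rw [Function.update_self] at hcol
          subst hcol
          have hxuw : x = u ∨ x = w := Sym2.mem_iff.mp hx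
          have hnotfull : ¬ c ≤ (S'.filter (fun (e : G.edgeSet) => x ∈ (e : Sym2 V) ∧
              col' e = j)).card := by
            rcases hxuw with rfl | rfl
            · intro hge
              apply hj
              rw [Finset.mem_union]
              left
              rw [hF]
              simp only [Finset.mem_filter, Finset.mem_univ, true_and]
              exact hge
            · intro hge
              apply hj
              rw [Finset.mem_union]
              right
              rw [hF]
              simp only [Finset.mem_filter, Finset.mem_univ, true_and]
              exact hge
          calc (insert (⟨s(u,w), hs⟩ : G.edgeSet)
                (S'.filter (fun (e : G.edgeSet) => x ∈ (e : Sym2 V) ∧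
                  Function.update col' ⟨s(u, w), hs⟩ j e = j))).card
              ≤ (S'.filter (fun (e : G.edgeSet) => x ∈ (e : Sym2 V) ∧
                  Function.update col' ⟨s(u, w), hs⟩ j e = j)).card + 1 :=
                Finset.card_insert_le _ _
            _ = (S'.filter (fun (e : G.edgeSet) => x ∈ (e : Sym2 V) ∧ col' e = j)).card + 1 := by
                rw [hfilter]
            _ ≤ c := by omega
        · rw [hfilter]
          exact hcol' x j'
  obtain ⟨col, hcol⟩ := key Finset.univ
  refine ⟨col, fun v j => ?_⟩
  have hn : {e : G.edgeSet | v ∈ (e : Sym2 V) ∧ col e = j}.ncard =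
      (Finset.univ.filter (fun e : G.edgeSet =>
        v ∈ (e : Sym2 V) ∧ col e = j)).card := by
    rw [Set.ncard_eq_toFinset_card']
    congr 1
    ext e
    simp
  rw [hn]
  calc ((Finset.univ.filter (fun e : G.edgeSet =>
        v ∈ (e : Sym2 V) ∧ col e = j)).card : ℤ)
      ≤ (c : ℤ) := by exact_mod_cast hcol v j
    _ ≤ _ := hceil
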